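/- Let S be a local symmetric good semigroup with maximal ideal M_S = S ∖ {0}. If S ≠ ℕ^I, then M_S − M_S = S ∪ Δ(τ_S). -/

import Mathlib

/-! Combinatorics of good semigroups in `ℤ^I` (value semigroups of curve
singularities), following Korell–Schulze–Tozzo. -/

section GoodSemigroups

variable {I : Type*} [Fintype I] [Nonempty I]

/-- Property (E0): `E` contains a translate of `ℕ^I`, i.e. an upper cone. -/
def propE0 (E : Set (I → ℤ)) : Prop :=
  ∃ α : I → ℤ, ∀ β : I → ℤ, α ≤ β → β ∈ E

/-- Property (E1): closure under componentwise minima. -/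
def propE1 (E : Set (I → ℤ)) : Prop :=
  ∀ α ∈ E, ∀ β ∈ E, (fun i => min (α i) (β i)) ∈ E

/-- Property (E2). -/
def propE2 (E : Set (I → ℤ)) : Prop :=
  ∀ α ∈ E, ∀ β ∈ E, ∀ j : I, α j = β j →
    ∃ ε ∈ E, α j < ε j ∧
      ∀ i : I, min (α i) (β i) ≤ ε i ∧ (α i ≠ β i → ε i = min (α i) (β i))

/-- A good semigroup: a submonoid of `ℤ^I` whose unique minimal element is `0`
(equivalently all elements are `≥ 0`) satisfying (E0), (E1) and (E2). -/
def IsGoodSemigroup (S : Set (I → ℤ)) : Prop :=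
  (0 : I → ℤ) ∈ S ∧ (∀ α ∈ S, ∀ β ∈ S, α + β ∈ S) ∧ (∀ α ∈ S, 0 ≤ α) ∧
    propE0 S ∧ propE1 S ∧ propE2 S

/-- The difference `E − F = {α : α + F ⊆ E}`. -/
def sgDiff (E F : Set (I → ℤ)) : Set (I → ℤ) :=
  {α | ∀ β ∈ F, α + β ∈ E}

/-- A semigroup ideal of a good semigroup `S`. -/
def IsSgIdeal (S E : Set (I → ℤ)) : Prop :=
  E.Nonempty ∧ (∀ α ∈ E, ∀ β ∈ S, α + β ∈ E) ∧ ∃ α ∈ S, ∀ β ∈ E, α + β ∈ S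

/-- A good semigroup ideal of `S`: a semigroup ideal satisfying (E1) and (E2). -/
def IsGoodIdeal (S E : Set (I → ℤ)) : Prop :=
  IsSgIdeal S E ∧ propE1 E ∧ propE2 E

/-- The (componentwise) minimal element `μ_E` of a good semigroup ideal. -/
noncomputable def sgMu (E : Set (I → ℤ)) : I → ℤ :=
  fun i => sInf {n : ℤ | ∃ α ∈ E, α i = n}

/-- The conductor ideal `C_E = E − ℕ^I`. -/
def sgCond (E : Set (I → ℤ)) : Set (I → ℤ) :=
  sgDiff E {β | 0 ≤ β}

/-- The conductor `γ_E = μ_{C_E} = inf {α : α + ℕ^I ⊆ E}`. -/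
noncomputable def sgGamma (E : Set (I → ℤ)) : I → ℤ :=
  sgMu (sgCond E)

/-- `τ_E = γ_E − 1`. -/
noncomputable def sgTau (E : Set (I → ℤ)) : I → ℤ :=
  sgGamma E - 1

/-- `Δ(α) = ⋃ i Δ_i(α)` where `Δ_i(α) = {β : β i = α i, β j > α j (j ≠ i)}`. -/
def sgDelta (α : I → ℤ) : Set (I → ℤ) :=
  ⋃ i : I, {β | β i = α i ∧ ∀ j : I, j ≠ i → α j < β j}

/-- The closed version `Δ̄(α)`. -/
def sgDeltaBar (α : I → ℤ) : Set (I → ℤ) :=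
  ⋃ i : I, {β | β i = α i ∧ ∀ j : I, j ≠ i → α j ≤ β j}

/-- A canonical ideal of `S`: a good semigroup ideal `K` such that any good
semigroup ideal `E` with `γ_E = γ_K` containing `K` equals `K`. -/
def IsCanonicalIdeal (S K : Set (I → ℤ)) : Prop :=
  IsGoodIdeal S K ∧
    ∀ E : Set (I → ℤ), IsGoodIdeal S E → sgGamma E = sgGamma K → K ⊆ E → E = K

/-- The normalized canonical ideal `K_S^0`. -/
noncomputable def sgK0 (S : Set (I → ℤ)) : Set (I → ℤ) :=
  {α | sgDelta (sgTau S - α) ∩ S = ∅}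

/-- A good semigroup is symmetric if it is a canonical ideal of itself. -/
def IsSymmetricSg (S : Set (I → ℤ)) : Prop :=
  IsGoodSemigroup S ∧ IsCanonicalIdeal S S

/-- A good semigroup is local if `0` is its only element with a zero coordinate. -/
def IsLocalSg (S : Set (I → ℤ)) : Prop :=
  ∀ α ∈ S, (∃ i : I, α i = 0) → α = 0

/-- A good semigroup ideal `E` is stable if `μ_E + (E − E) = E`. -/
noncomputable def IsStableSgIdeal (E : Set (I → ℤ)) : Prop :=
  (fun β => sgMu E + β) '' sgDiff E E = E

end GoodSemigroups

section AuxGoodSemigroups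

variable {I : Type*} [Fintype I] [Nonempty I]

section Aux
open Classical

variable {S : Set (I → ℤ)}
set_option linter.unusedSectionVars false

/-- membership in the conductor ideal, unfolded. -/
lemma mem_sgCond_iff {α : I → ℤ} : α ∈ sgCond S ↔ ∀ δ : I → ℤ, α ≤ δ → δ ∈ S := by
  constructor
  · intro h δ hδ
    have h0 : (0:I→ℤ) ≤ δ - α := by intro i; simp [hδ i]
    have := h (δ - α) h0
    simpa using this
  · intro h β hβ
    exact h _ (by intro i; simpa using hβ i)

/-- Existence of the conductor element: a minimum of the conductor ideal. -/
lemma exists_conductor (hS : IsGoodSemigroup S) :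
    ∃ g : I → ℤ, (∀ δ, g ≤ δ → δ ∈ S) ∧ ∀ α, (∀ δ, α ≤ δ → δ ∈ S) → g ≤ α := by
  classical
  obtain ⟨h0, hadd, hpos, ⟨a, ha⟩, hE1, hE2⟩ := hS
  set C : Set (I → ℤ) := {α | ∀ δ, α ≤ δ → δ ∈ S} with hC
  have hCne : a ∈ C := fun δ hδ => ha δ hδ
  -- C is closed under componentwise min
  have hCinf : ∀ x ∈ C, ∀ y ∈ C, (fun i => min (x i) (y i)) ∈ C := by
    intro x hx y hy δ hδ
    have h1 : (fun i => max (δ i) (x i)) ∈ S := hx _ (fun i => le_max_right _ _)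
    have h2 : (fun i => max (δ i) (y i)) ∈ S := hy _ (fun i => le_max_right _ _)
    have := hE1 _ h1 _ h2
    have heq : (fun i => min (max (δ i) (x i)) (max (δ i) (y i))) = δ := by
      funext i
      have := hδ i
      simp only at this ⊢
      omega
    rwa [heq] at this
  -- every element of C is nonneg
  have hCnn : ∀ x ∈ C, (0:I→ℤ) ≤ x := fun x hx => hpos x (hx x le_rfl)
  -- per-coordinate least values
  have hmin : ∀ i : I, ∃ m : ℤ, (∃ x ∈ C, x i = m) ∧ ∀ z : ℤ, (∃ x ∈ C, x i = z) → m ≤ z := by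
    intro i
    apply Int.exists_least_of_bdd (P := fun n => ∃ x ∈ C, x i = n)
    · exact ⟨0, by rintro z ⟨x, hx, rfl⟩; exact hCnn x hx i⟩
    · exact ⟨a i, a, hCne, rfl⟩
  choose m hm hmle using hmin
  -- combine witnesses over a finset
  have key : ∀ F : Finset I, ∃ x ∈ C, ∀ i ∈ F, x i = m i := by
    intro F
    induction F using Finset.induction with
    | empty => exact ⟨a, hCne, by simp⟩
    | insert b F' hnew ih =>
      obtain ⟨x, hx, hxF⟩ := ih
      obtain ⟨y, hy, hyb⟩ := hm b
      refine ⟨fun i => min (x i) (y i), hCinf x hx y hy, ?_⟩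
      intro i hi
      rcases Finset.mem_insert.mp hi with rfl | hi
      · have h1 : m i ≤ x i := hmle i _ ⟨x, hx, rfl⟩
        show min (x i) (y i) = m i
        omega
      · have h1 : m i ≤ y i := hmle i _ ⟨y, hy, rfl⟩
        have h2 := hxF i hi
        show min (x i) (y i) = m i
        omega
  obtain ⟨x, hx, hxall⟩ := key Finset.univ
  have hxm : x = m := funext fun i => hxall i (Finset.mem_univ i)
  subst hxm
  refine ⟨x, hx, ?_⟩
  intro α hα i
  exact hmle i _ ⟨α, hα, rfl⟩

/-- `sgGamma S` equals the conductor element. -/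
lemma sgGamma_eq (g : I → ℤ) (hg1 : ∀ δ, g ≤ δ → δ ∈ S)
    (hg2 : ∀ α, (∀ δ, α ≤ δ → δ ∈ S) → g ≤ α) : sgGamma S = g := by
  funext i
  have hset : {n : ℤ | ∃ α ∈ sgCond S, α i = n} = {n : ℤ | ∃ α, (∀ δ, α ≤ δ → δ ∈ S) ∧ α i = n} := by
    ext n; simp only [Set.mem_setOf_eq, mem_sgCond_iff]
  show sInf {n : ℤ | ∃ α ∈ sgCond S, α i = n} = g i
  rw [hset]
  apply le_antisymm
  · apply csInf_le
    · refine ⟨g i, ?_⟩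
      rintro z ⟨α, hα, rfl⟩
      exact hg2 α hα i
    · exact ⟨g, hg1, rfl⟩
  · exact le_csInf ⟨g i, ⟨g, hg1, rfl⟩⟩ (by rintro z ⟨α, hα, rfl⟩; exact hg2 α hα i)

/-- Absorption lemma: coordinates of `δ ∈ S` that are `≥` the conductor can be
raised arbitrarily (other coordinates staying fixed). -/
lemma absorb' (hS : IsGoodSemigroup S) (g : I → ℤ) (hg1 : ∀ δ, g ≤ δ → δ ∈ S)
    (β δ : I → ℤ) (hδ : δ ∈ S) (hle : δ ≤ β)
    (hpat : ∀ u, β u = δ u ∨ g u ≤ δ u) : β ∈ S := by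
  classical
  obtain ⟨h0, hadd, hpos, hE0, hE1, hE2⟩ := hS
  suffices H : ∀ n : ℕ, ∀ δ : I → ℤ, δ ∈ S → δ ≤ β → (∀ u, β u = δ u ∨ g u ≤ δ u) →
      (∑ u, (β u - δ u).toNat) = n → β ∈ S by
    exact H _ δ hδ hle hpat rfl
  intro n
  induction n using Nat.strong_induction_on with
  | _ n ih =>
    intro δ hδ hle hpat hn
    by_cases hbd : ∀ u, β u = δ u
    · have hβδ : β = δ := funext hbd
      rwa [hβδ]
    push_neg at hbd
    obtain ⟨u₀, hu₀⟩ := hbd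
    have hgu₀ : g u₀ ≤ δ u₀ := (hpat u₀).resolve_left hu₀
    have hlt : δ u₀ < β u₀ := lt_of_le_of_ne (hle u₀) (fun h => hu₀ h.symm)
    set c : I → ℤ := fun w => if w = u₀ then δ u₀ else max (g w) (δ w) + 1 with hc
    have hcS : c ∈ S := by
      apply hg1
      intro w
      by_cases hw : w = u₀
      · subst hw; simpa [hc] using hgu₀
      · simp only [hc, if_neg hw]
        have := le_max_left (g w) (δ w); omega
    obtain ⟨ε, hεS, hεu₀, hεmin⟩ := hE2 δ hδ c hcS u₀ (by simp [hc])
    have hεw : ∀ w, w ≠ u₀ → ε w = δ w := by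
      intro w hw
      have hne : δ w ≠ c w := by
        simp only [hc, if_neg hw]
        have := le_max_right (g w) (δ w); omega
      have := (hεmin w).2 hne
      simp only [hc, if_neg hw] at this
      have := le_max_right (g w) (δ w)
      omega
    set d : I → ℤ := fun w => if w = u₀ then β u₀ else max (g w) (δ w) + 1 with hd
    have hdS : d ∈ S := by
      apply hg1
      intro w
      by_cases hw : w = u₀
      · subst hw; simp only [hd, if_pos rfl]; omega
      · simp only [hd, if_neg hw]
        have := le_max_left (g w) (δ w); omega
    have hδ'S := hE1 ε hεS d hdS
    set δ' : I → ℤ := fun w => min (ε w) (d w) with hδ'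
    have hδ'w : ∀ w, w ≠ u₀ → δ' w = δ w := by
      intro w hw
      have h1 := hεw w hw
      have h2 := le_max_right (g w) (δ w)
      simp only [hδ', hd, if_neg hw]
      omega
    have hδ'u₀lt : δ u₀ < δ' u₀ := by
      simp only [hδ', hd, if_pos rfl]
      omega
    have hδ'u₀le : δ' u₀ ≤ β u₀ := by
      simp only [hδ', hd, if_pos rfl]
      omega
    have hle' : δ' ≤ β := by
      intro w
      by_cases hw : w = u₀
      · subst hw; exact hδ'u₀le
      · rw [hδ'w w hw]; exact hle w
    have hpat' : ∀ u, β u = δ' u ∨ g u ≤ δ' u := by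
      intro u
      by_cases hu : u = u₀
      · subst hu; right; omega
      · rw [hδ'w u hu]; exact hpat u
    have hmeas : (∑ u, (β u - δ' u).toNat) < n := by
      rw [← hn]
      apply Finset.sum_lt_sum
      · intro w _
        by_cases hw : w = u₀
        · subst hw; omega
        · rw [hδ'w w hw]

      · exact ⟨u₀, Finset.mem_univ _, by omega⟩
    exact ih _ hmeas δ' hδ'S hle' hpat' rfl

/-- Lemma B: no element of `S` lies in `Δ(τ)`. -/
lemma no_delta_tau (hS : IsGoodSemigroup S) (g : I → ℤ) (hg1 : ∀ δ, g ≤ δ → δ ∈ S)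
    (hg2 : ∀ α, (∀ δ, α ≤ δ → δ ∈ S) → g ≤ α)
    (σ : I → ℤ) (hσ : σ ∈ S) (i : I) (hσi : σ i = g i - 1)
    (hσgt : ∀ u, u ≠ i → g u - 1 < σ u) : False := by
  have hσC : ∀ δ, σ ≤ δ → δ ∈ S := by
    intro δ hδ
    by_cases hdi : g i ≤ δ i
    · apply hg1
      intro u
      by_cases hu : u = i
      · subst hu; exact hdi
      · have h1 := hσgt u hu
        have h2 : σ u ≤ δ u := hδ u
        show g u ≤ δ u
        omega
    · have hδi : δ i = σ i := by
        have h3 : σ i ≤ δ i := hδ i; omega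
      apply absorb' ⟨hS.1, hS.2.1, hS.2.2.1, hS.2.2.2.1, hS.2.2.2.2.1, hS.2.2.2.2.2⟩ g hg1 δ σ hσ hδ
      intro u
      by_cases hu : u = i
      · subst hu; left; exact hδi
      · right; have := hσgt u hu; omega
  have h5 : g i ≤ σ i := hg2 σ hσC i
  omega


/-! ### The key combinatorial construction -/

variable (S) in
/-- A tail: an element of `S` realizing a `Δ`-pattern on the `D`-coordinates. -/
def isTail (θ : I → ℤ) (D : Finset I) (β : I → ℤ) : Prop :=
  β ∈ S ∧ ∃ k ∈ D, β k = θ k ∧ ∀ i ∈ D, i ≠ k → θ i < β i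

variable (S) in
/-- A `U`-element: strictly above `θ` on all `D`-coordinates. -/
def isU (θ : I → ℤ) (D : Finset I) (β : I → ℤ) : Prop :=
  β ∈ S ∧ ∀ i ∈ D, θ i < β i

variable (S) in
/-- A blocker at a non-`D` coordinate. -/
def UBlk (θ : I → ℤ) (D : Finset I) (x : I → ℤ) : Prop :=
  ∃ β, isU S θ D β ∧ ∃ k, k ∉ D ∧ β k = x k ∧ ∀ u, u ∉ D → u ≠ k → x u < β u

variable (S) in
/-- `x` covers all tails. -/
def TCov (θ : I → ℤ) (D : Finset I) (x : I → ℤ) : Prop :=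
  ∀ β, isTail S θ D β → ∃ u, u ∉ D ∧ β u ≤ x u

lemma beast_claim (hS : IsGoodSemigroup S) (θ : I → ℤ) (D : Finset I) :
    ∀ n : ℕ, ∀ c : I → ℤ, (∀ i ∈ D, c i = θ i) →
    (∀ β, isTail S θ D β → ∃ u, u ∉ D ∧ β u ≤ c u) →
    (∑ u ∈ Finset.univ.filter (fun u : I => u ∉ D), (c u + 1).toNat) = n →
    ∃ x, x ≤ c ∧ (∀ i ∈ D, x i = θ i) ∧ ¬ UBlk S θ D x ∧ TCov S θ D x := by
  classical
  obtain ⟨h0S, hadd, hposS, hE0, hE1, hE2⟩ := hS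
  intro n
  induction n using Nat.strong_induction_on with
  | _ n ih =>
  intro c hcD hP1 hn
  set R : Finset I := Finset.univ.filter (fun u : I => u ∉ D) with hR
  have hmemR : ∀ u : I, u ∈ R ↔ u ∉ D := by
    intro u; simp [hR]
  set X : Set (I → ℤ) := {x | x ≤ c ∧ (∀ i ∈ D, x i = θ i) ∧ ¬ UBlk S θ D x} with hX
  -- X is nonempty
  have hx0 : (fun i => if i ∈ D then θ i else min (c i) (-1)) ∈ X := by
    refine ⟨?_, ?_, ?_⟩
    · intro i
      by_cases hi : i ∈ D
      · simp only [if_pos hi]; rw [hcD i hi]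
      · simp only [if_neg hi]; omega
    · intro i hi; simp [if_pos hi]
    · rintro ⟨β, hβU, k, hkD, hβk, -⟩
      have h1 : (0:ℤ) ≤ β k := hposS β hβU.1 k
      simp only [if_neg hkD] at hβk
      omega
  -- X is closed under componentwise max
  have hXsup : ∀ x ∈ X, ∀ y ∈ X, (fun i => max (x i) (y i)) ∈ X := by
    intro x hx y hy
    refine ⟨?_, ?_, ?_⟩
    · intro i
      have ha : x i ≤ c i := hx.1 i; have hb : y i ≤ c i := hy.1 i
      show max (x i) (y i) ≤ c i
      omega
    · intro i hi
      have h1 := hx.2.1 i hi; have h2 := hy.2.1 i hi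
      show max (x i) (y i) = θ i
      omega
    · rintro ⟨β, hβU, k, hkD, hβk, hstr⟩
      rcases max_choice (x k) (y k) with hm | hm
      · apply hx.2.2
        refine ⟨β, hβU, k, hkD, by rw [hβk]; exact hm, ?_⟩
        intro u hu huk
        have := hstr u hu huk
        have h3 : max (x u) (y u) < β u := this
        omega
      · apply hy.2.2
        refine ⟨β, hβU, k, hkD, by rw [hβk]; exact hm, ?_⟩
        intro u hu huk
        have h3 : max (x u) (y u) < β u := hstr u hu huk
        omega
  -- coordinatewise maxima of X
  have hmax : ∀ u : I, u ∉ D → ∃ M : ℤ, (∃ x ∈ X, x u = M) ∧ ∀ z : ℤ, (∃ x ∈ X, x u = z) → z ≤ M := by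
    intro u hu
    apply Int.exists_greatest_of_bdd (P := fun z => ∃ x ∈ X, x u = z)
    · exact ⟨c u, by rintro z ⟨x, hx, rfl⟩; exact hx.1 u⟩
    · exact ⟨_, _, hx0, rfl⟩
  choose Mf hM1 hM2 using hmax
  set xbar : I → ℤ := fun i => if h : i ∈ D then θ i else Mf i h with hxbar
  have hXub : ∀ y ∈ X, ∀ u, y u ≤ xbar u := by
    intro y hy u
    by_cases hu : u ∈ D
    · simp only [hxbar, dif_pos hu]
      exact le_of_eq (hy.2.1 u hu)
    · simp only [hxbar, dif_neg hu]
      exact hM2 u hu _ ⟨y, hy, rfl⟩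
  have hcomb : ∀ F : Finset I, ∃ x ∈ X, ∀ u ∈ F, x u = xbar u := by
    intro F
    induction F using Finset.induction with
    | empty => exact ⟨_, hx0, by simp⟩
    | insert a F' hnew ihF =>
      obtain ⟨x, hx, hxF⟩ := ihF
      by_cases ha : a ∈ D
      · refine ⟨x, hx, ?_⟩
        intro u hu
        rcases Finset.mem_insert.mp hu with rfl | hu
        · simp only [hxbar, dif_pos ha]
          exact hx.2.1 u ha
        · exact hxF u hu
      · obtain ⟨y, hy, hya⟩ := hM1 a ha
        refine ⟨_, hXsup x hx y hy, ?_⟩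
        intro u hu
        rcases Finset.mem_insert.mp hu with rfl | hu
        · have h1 : x u ≤ xbar u := hXub x hx u
          have h2 : xbar u = Mf u ha := by simp [hxbar, dif_neg ha]
          show max (x u) (y u) = xbar u
          omega
        · have h1 : y u ≤ xbar u := hXub y hy u
          have h2 := hxF u hu
          show max (x u) (y u) = xbar u
          omega
  have hxbarX : xbar ∈ X := by
    obtain ⟨x, hx, hxall⟩ := hcomb Finset.univ
    have : x = xbar := funext fun u => hxall u (Finset.mem_univ u)
    rwa [this] at hx
  by_cases hTC : TCov S θ D xbar
  · exact ⟨xbar, hxbarX.1, hxbarX.2.1, hxbarX.2.2, hTC⟩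
  -- uncovered tail
  obtain ⟨t₀, ht₀, ht₀un⟩ : ∃ β, isTail S θ D β ∧ ∀ u, u ∉ D → xbar u < β u := by
    by_contra hcon
    push_neg at hcon
    apply hTC
    intro β hβ
    obtain ⟨u, hu, hle⟩ := hcon β hβ
    exact ⟨u, hu, hle⟩
  -- the pool of violators and the potential
  set P : (I → ℤ) → Prop :=
    fun y => (isTail S θ D y ∨ isU S θ D y) ∧ ∀ u, u ∉ D → xbar u < y u with hP
  have hPS : ∀ y, P y → y ∈ S := by
    rintro y ⟨hy, -⟩
    rcases hy with hy | hy
    · exact hy.1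
    · exact hy.1
  set Φ : (I → ℤ) → ℤ := fun y => ∑ u ∈ R, min (y u) (c u) with hΦ
  set Φ₂ : (I → ℤ) → ℤ := fun y => ∑ u ∈ R, (if c u < y u then (1:ℤ) else 0) with hΦ₂
  set Ψ : (I → ℤ) → ℤ := fun y => ((R.card : ℤ) + 1) * Φ y + Φ₂ y with hΨ
  have hΦbd : ∀ y, Φ y ≤ ∑ u ∈ R, c u := by
    intro y
    apply Finset.sum_le_sum
    intro u _
    exact min_le_right _ _
  have hΦ₂bd : ∀ y, Φ₂ y ≤ R.card := by
    intro y
    calc Φ₂ y ≤ ∑ u ∈ R, (1:ℤ) := by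
          apply Finset.sum_le_sum
          intro u _
          split <;> omega
    _ = R.card := by simp
  have hΦ₂nn : ∀ y, 0 ≤ Φ₂ y := by
    intro y
    apply Finset.sum_nonneg
    intro u _
    split <;> omega
  have hcard1 : (0:ℤ) ≤ (R.card : ℤ) + 1 := by positivity
  obtain ⟨Z, ⟨yb, hybP, hΨyb⟩, hZmax⟩ :
      ∃ Z : ℤ, (∃ y, P y ∧ Ψ y = Z) ∧ ∀ z : ℤ, (∃ y, P y ∧ Ψ y = z) → z ≤ Z := by
    apply Int.exists_greatest_of_bdd (P := fun z => ∃ y, P y ∧ Ψ y = z)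
    · refine ⟨((R.card : ℤ) + 1) * (∑ u ∈ R, c u) + R.card, ?_⟩
      rintro z ⟨y, hy, rfl⟩
      have h1 := hΦbd y
      have h2 := hΦ₂bd y
      have h3 := mul_le_mul_of_nonneg_left h1 hcard1
      simp only [hΨ]
      linarith
    · refine ⟨Ψ t₀, t₀, ⟨Or.inl ht₀, ht₀un⟩, rfl⟩
  -- the improved candidate
  set x' : I → ℤ := fun i => if i ∈ D then θ i else max (xbar i) (min (yb i) (c i)) with hx'
  have hx'le : x' ≤ c := by
    intro i
    by_cases hi : i ∈ D
    · simp only [hx', if_pos hi]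
      exact le_of_eq (hcD i hi).symm
    · simp only [hx', if_neg hi]
      have hxc : xbar i ≤ c i := hxbarX.1 i
      omega
  have hx'D : ∀ i ∈ D, x' i = θ i := by
    intro i hi; simp [hx', if_pos hi]
  have hx'ge : ∀ u, xbar u ≤ x' u := by
    intro u
    by_cases hu : u ∈ D
    · simp only [hx', if_pos hu]
      exact le_of_eq (hxbarX.2.1 u hu)
    · simp only [hx', if_neg hu]
      omega
  -- a gain coordinate
  obtain ⟨u₁, hu₁D, hu₁lt⟩ : ∃ u, u ∉ D ∧ xbar u < c u := by
    by_contra hcon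
    push_neg at hcon
    obtain ⟨u, hu, hle⟩ := hP1 t₀ ht₀
    have h1 := ht₀un u hu
    have h2 := hcon u hu
    have h3 : xbar u ≤ c u := hxbarX.1 u
    omega
  have hgain : xbar u₁ < x' u₁ := by
    have h1 := (hybP.2) u₁ hu₁D
    simp only [hx', if_neg hu₁D]
    omega
  -- x' is blocked
  have hUB : UBlk S θ D x' := by
    by_contra hUB
    have : x' ∈ X := ⟨hx'le, hx'D, hUB⟩
    have := hXub x' this u₁
    omega
  obtain ⟨p, hpU, k', hk'D, hpk', hpstrict⟩ := hUB
  have hpS : p ∈ S := hpU.1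
  have hk'R : k' ∈ R := (hmemR k').mpr hk'D
  have hx'k' : xbar k' < x' k' := by
    rcases lt_or_ge (xbar k') (x' k') with h | h
    · exact h
    · exfalso
      apply hxbarX.2.2
      refine ⟨p, hpU, k', hk'D, ?_, ?_⟩
      · have h2 := hx'ge k'
        omega
      · intro u hu huk
        have h3 := hpstrict u hu huk
        have h4 := hx'ge u
        omega
  have hminval : x' k' = min (yb k') (c k') := by
    have := hx'k'
    simp only [hx', if_neg hk'D] at this ⊢
    omega
  -- basic per-coordinate estimates off k'
  have hoffk : ∀ u, u ∉ D → u ≠ k' → min (yb u) (c u) < p u := by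
    intro u hu huk
    have h1 := hpstrict u hu huk
    simp only [hx', if_neg hu] at h1
    omega
  by_cases hA : yb k' ≤ c k'
  · -- CASE A
    have hpk'' : yb k' = p k' := by
      rw [hpk', hminval]; omega
    obtain ⟨r, hrS, hrk', hrmin⟩ := hE2 yb (hPS yb hybP) p hpS k' hpk''
    have hrge : ∀ i, min (yb i) (p i) ≤ r i := fun i => (hrmin i).1
    -- r is a tail or a U-element
    have hrTU : isTail S θ D r ∨ isU S θ D r := by
      rcases hybP.1 with hyT | hyU
      · left
        obtain ⟨-, k, hkD, hyk, hystrict⟩ := hyT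
        refine ⟨hrS, k, hkD, ?_, ?_⟩
        · have h1 : θ k < p k := hpU.2 k hkD
          have h2 : yb k ≠ p k := by omega
          have h3 := (hrmin k).2 h2
          omega
        · intro i hi hik
          have h1 := hystrict i hi hik
          have h2 := hpU.2 i hi
          have h3 := hrge i
          omega
      · right
        refine ⟨hrS, ?_⟩
        intro i hi
        have h1 := hyU.2 i hi
        have h2 := hpU.2 i hi
        have h3 := hrge i
        omega
    have hrP : P r := by
      refine ⟨hrTU, ?_⟩
      intro u hu
      by_cases huk : u = k'
      · subst huk
        have := hybP.2 u hu
        omega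
      · have h1 := hybP.2 u hu
        have h2 := hoffk u hu huk
        have h3 := hrge u
        have h4 : xbar u ≤ c u := hxbarX.1 u
        omega
    -- off-k' estimates for the sums
    have hterm : ∀ u ∈ R, u ≠ k' → min (yb u) (c u) ≤ min (r u) (c u) ∧
        (if c u < yb u then (1:ℤ) else 0) ≤ (if c u < r u then (1:ℤ) else 0) := by
      intro u huR huk
      have hu : u ∉ D := (hmemR u).mp huR
      have h1 := hoffk u hu huk
      have h2 := hrge u
      constructor
      · omega
      · split_ifs <;> omega
    -- Ψ grows strictly: contradiction with maximality
    have hΨlt : Ψ yb < Ψ r := by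
      rcases lt_or_ge (yb k') (c k') with hA1 | hA1
      · -- A1: strict gain in Φ
        have hΦlt : Φ yb < Φ r := by
          apply Finset.sum_lt_sum
          · intro u huR
            by_cases huk : u = k'
            · subst huk; omega
            · exact (hterm u huR huk).1
          · exact ⟨k', hk'R, by omega⟩
        have hΦ₂ge : Φ₂ yb ≤ Φ₂ r + 1 := by
          have h1 : ∀ u ∈ R, (if c u < yb u then (1:ℤ) else 0) ≤
              (if c u < r u then (1:ℤ) else 0) + (if u = k' then 1 else 0) := by
            intro u huR
            by_cases huk : u = k'
            · simp only [if_pos huk]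
              split_ifs <;> omega
            · simp only [if_neg huk, add_zero]
              exact (hterm u huR huk).2
          calc Φ₂ yb ≤ ∑ u ∈ R, ((if c u < r u then (1:ℤ) else 0) + (if u = k' then 1 else 0)) :=
                Finset.sum_le_sum h1
          _ = Φ₂ r + ∑ u ∈ R, (if u = k' then (1:ℤ) else 0) := by
                rw [Finset.sum_add_distrib]
          _ = Φ₂ r + 1 := by
                rw [Finset.sum_ite_eq' R k' (fun _ => (1:ℤ))]
                simp [hk'R]
        have h3 : ((R.card:ℤ)+1) * (Φ yb + 1) ≤ ((R.card:ℤ)+1) * Φ r :=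
          mul_le_mul_of_nonneg_left (by omega) hcard1
        have hcpos : 0 < R.card := Finset.card_pos.mpr ⟨k', hk'R⟩
        have hcpos' : (1:ℤ) ≤ (R.card : ℤ) := by exact_mod_cast hcpos
        simp only [hΨ]
        nlinarith [hΦ₂bd r, hΦ₂nn yb]
      · -- A2: yb k' = c k' ; gain in Φ₂, no loss in Φ
        have hA2 : yb k' = c k' := by omega
        have hΦle : Φ yb ≤ Φ r := by
          apply Finset.sum_le_sum
          intro u huR
          by_cases huk : u = k'
          · subst huk; omega
          · exact (hterm u huR huk).1
        have hΦ₂lt : Φ₂ yb < Φ₂ r := by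
          apply Finset.sum_lt_sum
          · intro u huR
            by_cases huk : u = k'
            · subst huk
              split_ifs <;> omega
            · exact (hterm u huR huk).2
          · refine ⟨k', hk'R, ?_⟩
            have h1 : c k' < r k' := by omega
            simp only [if_pos h1, if_neg (by omega : ¬ c k' < yb k')]
            omega
        have h3 : ((R.card:ℤ)+1) * Φ yb ≤ ((R.card:ℤ)+1) * Φ r :=
          mul_le_mul_of_nonneg_left hΦle hcard1
        simp only [hΨ]
        omega
    have := hZmax (Ψ r) ⟨r, hrP, rfl⟩
    omega
  · -- CASE B : c k' < yb k'
    push_neg at hA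
    have hpc : p k' = c k' := by
      rw [hpk', hminval]; omega
    have hpP : P p := by
      refine ⟨Or.inr hpU, ?_⟩
      intro u hu
      by_cases huk : u = k'
      · subst huk
        have h1 := hx'k'
        rw [hminval] at h1
        omega
      · have h1 := hoffk u hu huk
        have h2 : xbar u ≤ c u := hxbarX.1 u
        have h3 := hybP.2 u hu
        omega
    by_cases hEx : ∃ u, u ∈ R ∧ u ≠ k' ∧ yb u < c u
    · -- B-strict : Ψ p > Ψ yb
      obtain ⟨u₂, hu₂R, hu₂k, hu₂lt⟩ := hEx
      have hΦlt : Φ yb < Φ p := by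
        apply Finset.sum_lt_sum
        · intro u huR
          by_cases huk : u = k'
          · subst huk
            omega
          · have h1 := hoffk u ((hmemR u).mp huR) huk
            omega
        · refine ⟨u₂, hu₂R, ?_⟩
          have h1 := hoffk u₂ ((hmemR u₂).mp hu₂R) hu₂k
          omega
      have h3 : ((R.card:ℤ)+1) * (Φ yb + 1) ≤ ((R.card:ℤ)+1) * Φ p :=
        mul_le_mul_of_nonneg_left (by omega) hcard1
      have hΨlt : Ψ yb < Ψ p := by
        simp only [hΨ]
        nlinarith [hΦ₂bd yb, hΦ₂nn p]
      have := hZmax (Ψ p) ⟨p, hpP, rfl⟩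
      omega
    · -- B-recurse
      push_neg at hEx
      have hAll : ∀ u, u ∉ D → u ≠ k' → c u ≤ yb u := by
        intro u hu huk
        exact hEx u ((hmemR u).mpr hu) huk
      have hp2 : ∀ u, u ∉ D → u ≠ k' → c u < p u := by
        intro u hu huk
        have h1 := hoffk u hu huk
        have h2 := hAll u hu huk
        omega
      set c' : I → ℤ := fun i => if i = k' then c k' - 1 else c i with hc'
      have hc'D : ∀ i ∈ D, c' i = θ i := by
        intro i hi
        have : i ≠ k' := fun h => hk'D (h ▸ hi)
        simp only [hc', if_neg this]
        exact hcD i hi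
      have hc'le : ∀ i, c' i ≤ c i := by
        intro i
        by_cases h : i = k'
        · subst h; simp only [hc', if_pos rfl]; omega
        · simp only [hc', if_neg h]
          exact le_rfl
      have hP1' : ∀ β, isTail S θ D β → ∃ u, u ∉ D ∧ β u ≤ c' u := by
        intro t ht
        obtain ⟨u₀, hu₀D, hu₀le⟩ := hP1 t ht
        by_cases h1 : u₀ = k'
        · subst h1
          by_cases h2 : t u₀ ≤ c u₀ - 1
          · exact ⟨u₀, hu₀D, by simp only [hc', if_pos rfl]; omega⟩
          · have h2' : t u₀ = c u₀ := by omega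
            by_cases h3 : ∃ u, u ∉ D ∧ u ≠ u₀ ∧ t u ≤ c u
            · obtain ⟨u, hu, huk, hule⟩ := h3
              exact ⟨u, hu, by simp only [hc', if_neg huk]; omega⟩
            · exfalso
              push_neg at h3
              have htp : t u₀ = p u₀ := by omega
              obtain ⟨r, hrS, hrk', hrmin⟩ := hE2 t ht.1 p hpS u₀ htp
              -- r is a tail
              obtain ⟨-, k, hkD, htk, htstrict⟩ := ht
              have hrT : isTail S θ D r := by
                refine ⟨hrS, k, hkD, ?_, ?_⟩
                · have ha1 : θ k < p k := hpU.2 k hkD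
                  have ha2 : t k ≠ p k := by omega
                  have ha3 := (hrmin k).2 ha2
                  omega
                · intro i hi hik
                  have hb1 := htstrict i hi hik
                  have hb2 := hpU.2 i hi
                  have hb3 := (hrmin i).1
                  omega
              obtain ⟨u, hu, hule⟩ := hP1 r hrT
              by_cases huk : u = u₀
              · subst huk
                have := (hrmin u).1
                omega
              · have hd1 := h3 u hu huk
                have hd2 := hp2 u hu huk
                have hd3 := (hrmin u).1
                omega
        · exact ⟨u₀, hu₀D, by simp only [hc', if_neg h1]; omega⟩
      have hck'nn : 0 ≤ c k' := by
        have h0 : (0:ℤ) ≤ p k' := hposS p hpS k'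
        omega
      have hmeas : (∑ u ∈ Finset.univ.filter (fun u : I => u ∉ D), (c' u + 1).toNat) < n := by
        rw [← hn]
        apply Finset.sum_lt_sum
        · intro u huR
          have := hc'le u
          omega
        · refine ⟨k', hk'R, ?_⟩
          simp only [hc', if_pos rfl]
          omega
      obtain ⟨x, hxc', hxD, hxU, hxT⟩ := ih _ hmeas c' hc'D hP1' rfl
      exact ⟨x, fun i => le_trans (hxc' i) (hc'le i), hxD, hxU, hxT⟩


lemma beast (hS : IsGoodSemigroup S) (θ : I → ℤ) (D : Finset I) (j : I) (hj : j ∉ D)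
    (hG0 : ∀ β ∈ S, ∀ k, ¬(β k = θ k ∧ ∀ i, i ≠ k → θ i < β i))
    (hGH : ∀ k ∈ D, ∃ h : I → ℤ, (∀ i, 0 ≤ h i) ∧ (∀ i, i ∉ D → h i = 0) ∧ 1 ≤ h k ∧
        ∀ β ∈ S, ∀ k', ¬(β k' = θ k' - h k' ∧ ∀ i, i ≠ k' → θ i - h i < β i)) :
    ∃ x : I → ℤ, x ≤ θ ∧ x j < θ j ∧ (∀ i ∈ D, x i = θ i) ∧
      ∀ β ∈ S, ∀ k, ¬(β k = x k ∧ ∀ i, i ≠ k → x i < β i) := by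
  classical
  set c₀ : I → ℤ := fun i => if i = j then θ j - 1 else θ i with hc₀
  have hc₀D : ∀ i ∈ D, c₀ i = θ i := by
    intro i hi
    have hij : i ≠ j := fun h => hj (h ▸ hi)
    simp [hc₀, if_neg hij]
  have hP1 : ∀ β, isTail S θ D β → ∃ u, u ∉ D ∧ β u ≤ c₀ u := by
    intro t ht
    obtain ⟨htS, k, hkD, htk, htstrict⟩ := ht
    by_contra hcon
    push_neg at hcon
    have hgt : ∀ u, u ∉ D → c₀ u < t u := fun u hu => hcon u hu
    have htj : θ j - 1 < t j := by
      have h1 := hgt j hj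
      simpa [hc₀] using h1
    have htu : ∀ u, u ∉ D → u ≠ j → θ u < t u := by
      intro u hu huj
      have h1 := hgt u hu
      simpa [hc₀, if_neg huj] using h1
    by_cases hj2 : θ j < t j
    · apply hG0 t htS k
      refine ⟨htk, ?_⟩
      intro i hik
      by_cases hiD : i ∈ D
      · exact htstrict i hiD hik
      · by_cases hij : i = j
        · subst hij; exact hj2
        · exact htu i hiD hij
    · have htj' : t j = θ j := by omega
      obtain ⟨h, hh0, hhD, hhk, hhkill⟩ := hGH k hkD
      apply hhkill t htS j
      constructor
      · rw [hhD j hj]; omega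
      · intro i hij
        by_cases hiD : i ∈ D
        · by_cases hik : i = k
          · subst hik
            have h2 := hh0 i
            omega
          · have h2 := htstrict i hiD hik
            have h3 := hh0 i
            omega
        · have h2 := htu i hiD hij
          rw [hhD i hiD]
          omega
  obtain ⟨x, hxc, hxD, hxU, hxT⟩ := beast_claim hS θ D _ c₀ hc₀D hP1 rfl
  refine ⟨x, ?_, ?_, hxD, ?_⟩
  · intro i
    have h1 : x i ≤ c₀ i := hxc i
    by_cases hij : i = j
    · subst hij
      simp only [hc₀, if_pos rfl] at h1
      show x i ≤ θ i
      omega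
    · simp only [hc₀, if_neg hij] at h1
      exact h1
  · have h1 : x j ≤ c₀ j := hxc j
    simp only [hc₀, if_pos rfl] at h1
    omega
  · rintro β hβ k ⟨hβk, hβstrict⟩
    by_cases hkD : k ∈ D
    · have hβT : isTail S θ D β := by
        refine ⟨hβ, k, hkD, ?_, ?_⟩
        · rw [hβk, hxD k hkD]
        · intro i hiD hik
          have h1 := hβstrict i hik
          rw [← hxD i hiD]
          exact h1
      obtain ⟨u, huD, hule⟩ := hxT β hβT
      have huk : u ≠ k := fun h => huD (h ▸ hkD)
      have h2 := hβstrict u huk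
      omega
    · apply hxU
      refine ⟨β, ⟨hβ, ?_⟩, k, hkD, hβk, ?_⟩
      · intro i hiD
        have hik : i ≠ k := fun h => hkD (h ▸ hiD)
        rw [← hxD i hiD]
        exact hβstrict i hik
      · intro u hu huk
        exact hβstrict u huk


/-! ### The normalized canonical ideal -/

lemma mem_sgDelta_iff {t β : I → ℤ} :
    β ∈ sgDelta t ↔ ∃ i, β i = t i ∧ ∀ u, u ≠ i → t u < β u := by
  simp only [sgDelta, Set.mem_iUnion, Set.mem_setOf_eq]

lemma mem_sgK0_iff {α : I → ℤ} :
    α ∈ sgK0 S ↔ ∀ σ ∈ S, ∀ i, ¬(σ i = sgTau S i - α i ∧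
      ∀ u, u ≠ i → sgTau S u - α u < σ u) := by
  simp only [sgK0, Set.mem_setOf_eq, Set.eq_empty_iff_forall_notMem]
  constructor
  · rintro h σ hσ i ⟨h1, h2⟩
    apply h σ
    refine ⟨?_, hσ⟩
    rw [mem_sgDelta_iff]
    exact ⟨i, by simpa using h1, by intro u hu; simpa using h2 u hu⟩
  · rintro h σ ⟨hd, hσ⟩
    rw [mem_sgDelta_iff] at hd
    obtain ⟨i, h1, h2⟩ := hd
    exact h σ hσ i ⟨by simpa using h1, by intro u hu; simpa using h2 u hu⟩

lemma S_subset_K0 (hS : IsGoodSemigroup S) (g : I → ℤ) (hg1 : ∀ δ, g ≤ δ → δ ∈ S)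
    (hg2 : ∀ α, (∀ δ, α ≤ δ → δ ∈ S) → g ≤ α)
    (hτ : ∀ i, sgTau S i = g i - 1) : S ⊆ sgK0 S := by
  intro α hα
  rw [mem_sgK0_iff]
  rintro σ hσ i ⟨h1, h2⟩
  rw [hτ i] at h1
  refine no_delta_tau hS g hg1 hg2 (σ + α) (hS.2.1 σ hσ α hα) i ?_ ?_
  · show σ i + α i = g i - 1
    omega
  · intro u hu
    have h3 := h2 u hu
    rw [hτ u] at h3
    show g u - 1 < σ u + α u
    omega

lemma K0_nonneg (hS : IsGoodSemigroup S) (g : I → ℤ) (hg1 : ∀ δ, g ≤ δ → δ ∈ S)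
    (hτ : ∀ i, sgTau S i = g i - 1) : ∀ α ∈ sgK0 S, (0:I→ℤ) ≤ α := by
  classical
  intro α hα i
  show (0:ℤ) ≤ α i
  by_contra hneg
  push_neg at hneg
  rw [mem_sgK0_iff] at hα
  set σ : I → ℤ := fun u => if u = i then sgTau S i - α i
    else max (g u) (sgTau S u - α u) + 1 with hσdef
  have hσS : σ ∈ S := by
    apply hg1
    intro u
    by_cases hu : u = i
    · subst hu
      simp only [hσdef, if_pos rfl, hτ u]
      omega
    · simp only [hσdef, if_neg hu]
      have := le_max_left (g u) (sgTau S u - α u)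
      omega
  apply hα σ hσS i
  constructor
  · simp [hσdef]
  · intro u hu
    simp only [hσdef, if_neg hu]
    have := le_max_right (g u) (sgTau S u - α u)
    omega

lemma K0_add (hS : IsGoodSemigroup S) : ∀ α ∈ sgK0 S, ∀ s ∈ S, α + s ∈ sgK0 S := by
  intro α hα s hs
  rw [mem_sgK0_iff] at hα ⊢
  rintro σ hσ i ⟨h1, h2⟩
  have h1' : σ i = sgTau S i - (α i + s i) := h1
  apply hα (σ + s) (hS.2.1 σ hσ s hs) i
  constructor
  · show σ i + s i = sgTau S i - α i
    omega
  · intro u hu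
    have h3 : sgTau S u - (α u + s u) < σ u := h2 u hu
    show sgTau S u - α u < σ u + s u
    omega

lemma K0_E1 : propE1 (sgK0 S) := by
  intro α hα β hβ
  rw [mem_sgK0_iff] at hα hβ ⊢
  rintro σ hσ i ⟨h1, h2⟩
  have h1' : σ i = sgTau S i - min (α i) (β i) := h1
  have h2' : ∀ u, u ≠ i → sgTau S u - min (α u) (β u) < σ u := h2
  rcases min_choice (α i) (β i) with hm | hm
  · apply hα σ hσ i
    refine ⟨by omega, ?_⟩
    intro u hu
    have h3 := h2' u hu
    have h4 := min_le_left (α u) (β u)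
    omega
  · apply hβ σ hσ i
    refine ⟨by omega, ?_⟩
    intro u hu
    have h3 := h2' u hu
    have h4 := min_le_right (α u) (β u)
    omega

lemma K0_E2 (hS : IsGoodSemigroup S) : propE2 (sgK0 S) := by
  classical
  intro α hα β hβ j hj
  set m : I → ℤ := fun i => min (α i) (β i) with hm
  have hmK : m ∈ sgK0 S := K0_E1 α hα β hβ
  set D : Finset I := Finset.univ.filter (fun i => α i ≠ β i) with hD
  have hmemD : ∀ i, i ∈ D ↔ α i ≠ β i := by intro i; simp [hD]
  have hjD : j ∉ D := by simp [hD, hj]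
  set θ : I → ℤ := fun i => sgTau S i - m i with hθ
  have hG0 : ∀ σ ∈ S, ∀ k, ¬(σ k = θ k ∧ ∀ i, i ≠ k → θ i < σ i) := by
    rw [mem_sgK0_iff] at hmK
    rintro σ hσ k ⟨h1, h2⟩
    exact hmK σ hσ k ⟨h1, h2⟩
  have hGH : ∀ k ∈ D, ∃ h : I → ℤ, (∀ i, 0 ≤ h i) ∧ (∀ i, i ∉ D → h i = 0) ∧ 1 ≤ h k ∧
      ∀ σ ∈ S, ∀ k', ¬(σ k' = θ k' - h k' ∧ ∀ i, i ≠ k' → θ i - h i < σ i) := by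
    intro k hk
    have hk' : α k ≠ β k := (hmemD k).mp hk
    rcases le_total (α k) (β k) with hab | hab
    · refine ⟨β - m, ?_, ?_, ?_, ?_⟩
      · intro i
        have := min_le_right (α i) (β i)
        show (0:ℤ) ≤ β i - m i
        simp only [hm]
        omega
      · intro i hi
        have hieq : α i = β i := by
          by_contra hne
          exact hi ((hmemD i).mpr hne)
        show β i - m i = 0
        simp only [hm]
        omega
      · show (1:ℤ) ≤ β k - m k
        simp only [hm]
        omega
      · rw [mem_sgK0_iff] at hβ
        rintro σ hσ k' ⟨h1, h2⟩
        apply hβ σ hσ k'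
        have h1' : σ k' = sgTau S k' - m k' - (β k' - m k') := h1
        refine ⟨by omega, ?_⟩
        intro u hu
        have h3 : sgTau S u - m u - (β u - m u) < σ u := h2 u hu
        omega
    · refine ⟨α - m, ?_, ?_, ?_, ?_⟩
      · intro i
        have := min_le_left (α i) (β i)
        show (0:ℤ) ≤ α i - m i
        simp only [hm]
        omega
      · intro i hi
        have hieq : α i = β i := by
          by_contra hne
          exact hi ((hmemD i).mpr hne)
        show α i - m i = 0
        simp only [hm]
        omega
      · show (1:ℤ) ≤ α k - m k
        simp only [hm]
        omega
      · rw [mem_sgK0_iff] at hα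
        rintro σ hσ k' ⟨h1, h2⟩
        apply hα σ hσ k'
        have h1' : σ k' = sgTau S k' - m k' - (α k' - m k') := h1
        refine ⟨by omega, ?_⟩
        intro u hu
        have h3 : sgTau S u - m u - (α u - m u) < σ u := h2 u hu
        omega
  obtain ⟨x, hxθ, hxj, hxD, hxΔ⟩ := beast hS θ D j hjD hG0 hGH
  refine ⟨fun i => sgTau S i - x i, ?_, ?_, ?_⟩
  · rw [mem_sgK0_iff]
    rintro σ hσ i ⟨h1, h2⟩
    apply hxΔ σ hσ i
    have h1' : σ i = sgTau S i - (sgTau S i - x i) := h1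
    refine ⟨by omega, ?_⟩
    intro u hu
    have h3 : sgTau S u - (sgTau S u - x u) < σ u := h2 u hu
    omega
  · have h1 : x j < θ j := hxj
    have hθj : θ j = sgTau S j - m j := rfl
    have h2 : m j = α j := by simp only [hm, hj, min_self]
    show α j < sgTau S j - x j
    omega
  · intro i
    constructor
    · have h1 : x i ≤ θ i := hxθ i
      have h2 : θ i = sgTau S i - m i := rfl
      show m i ≤ sgTau S i - x i
      omega
    · intro hne
      have hiD : i ∈ D := (hmemD i).mpr hne
      have h1 : x i = θ i := hxD i hiD
      have h2 : θ i = sgTau S i - m i := rfl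
      show sgTau S i - x i = m i
      omega


lemma K0_cond_eq (hS : IsGoodSemigroup S) (g : I → ℤ) (hg1 : ∀ δ, g ≤ δ → δ ∈ S)
    (hg2 : ∀ α, (∀ δ, α ≤ δ → δ ∈ S) → g ≤ α)
    (hτ : ∀ i, sgTau S i = g i - 1) : sgCond (sgK0 S) = sgCond S := by
  classical
  apply Set.Subset.antisymm
  · intro α hα
    have hα' : ∀ δ, α ≤ δ → δ ∈ sgK0 S := (mem_sgCond_iff (S := sgK0 S)).mp hα
    have hge : g ≤ α := by
      intro i
      show g i ≤ α i
      by_contra hni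
      push_neg at hni
      set δ : I → ℤ := fun u => if u = i then g i - 1 else max (α u) (sgTau S u) + 1 with hδdef
      have hδK : δ ∈ sgK0 S := by
        apply hα'
        intro u
        by_cases hu : u = i
        · subst hu
          simp only [hδdef, if_pos rfl]
          show α u ≤ g u - 1
          omega
        · simp only [hδdef, if_neg hu]
          have := le_max_left (α u) (sgTau S u)
          show α u ≤ max (α u) (sgTau S u) + 1
          omega
      rw [mem_sgK0_iff] at hδK
      apply hδK 0 hS.1 i
      constructor
      · have hδi : δ i = g i - 1 := by simp [hδdef]
        show (0:ℤ) = sgTau S i - δ i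
        rw [hτ i, hδi]
        omega
      · intro u hu
        have hδu : sgTau S u + 1 ≤ δ u := by
          simp only [hδdef, if_neg hu]
          have := le_max_right (α u) (sgTau S u)
          omega
        show sgTau S u - δ u < (0:ℤ)
        omega
    apply (mem_sgCond_iff (S := S)).mpr
    intro δ hδ
    exact hg1 δ (le_trans hge hδ)
  · intro α hα
    apply (mem_sgCond_iff (S := sgK0 S)).mpr
    intro δ hδ
    exact S_subset_K0 hS g hg1 hg2 hτ ((mem_sgCond_iff (S := S)).mp hα δ hδ)


lemma K0_goodIdeal (hS : IsGoodSemigroup S) (g : I → ℤ) (hg1 : ∀ δ, g ≤ δ → δ ∈ S)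
    (hg2 : ∀ α, (∀ δ, α ≤ δ → δ ∈ S) → g ≤ α)
    (hτ : ∀ i, sgTau S i = g i - 1) : IsGoodIdeal S (sgK0 S) := by
  refine ⟨⟨⟨0, S_subset_K0 hS g hg1 hg2 hτ hS.1⟩, K0_add hS, ⟨g, hg1 g le_rfl, ?_⟩⟩,
    K0_E1, K0_E2 hS⟩
  intro β hβ
  apply hg1
  intro i
  have h1 : (0:ℤ) ≤ β i := K0_nonneg hS g hg1 hτ β hβ i
  show g i ≤ g i + β i
  omega

end Aux

end AuxGoodSemigroups

/-- **Lemma.** Let `S` be a local symmetric good semigroup with maximal ideal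
`M_S = S \ {0}`. If `S ≠ ℕ^I`, then `M_S − M_S = S ∪ Δ(τ_S)`. -/
theorem stmt_8 {I : Type*} [Fintype I] [Nonempty I] (S : Set (I → ℤ))
    (hS : IsSymmetricSg S) (hloc : IsLocalSg S)
    (hne : S ≠ {β | 0 ≤ β}) :
    sgDiff (S \ {0}) (S \ {0}) = S ∪ sgDelta (sgTau S) := by
  classical
  obtain ⟨hgood, hcanon⟩ := hS
  obtain ⟨g, hg1, hg2⟩ := exists_conductor hgood
  have hγ : sgGamma S = g := sgGamma_eq g hg1 hg2
  have hτ : ∀ i, sgTau S i = g i - 1 := by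
    intro i
    show (sgGamma S - 1) i = g i - 1
    rw [hγ]
    simp
  have hgS : g ∈ S := hg1 g le_rfl
  have hgne : g ≠ 0 := by
    intro h0
    apply hne
    apply Set.Subset.antisymm
    · intro s hs
      exact hgood.2.2.1 s hs
    · intro s hs
      apply hg1 s
      rw [h0]
      exact hs
  have hgpos : ∀ i, 1 ≤ g i := by
    intro i
    have hgnn : (0:I→ℤ) ≤ g := hgood.2.2.1 g hgS
    by_contra hni
    push_neg at hni
    have h2 : (0:ℤ) ≤ g i := hgnn i
    have h0 : g i = 0 := by omega
    exact hgne (hloc g hgS ⟨i, h0⟩)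
  have hK0 : sgK0 S = S := by
    apply hcanon.2 (sgK0 S) (K0_goodIdeal hgood g hg1 hg2 hτ) ?_
      (S_subset_K0 hgood g hg1 hg2 hτ)
    show sgGamma (sgK0 S) = sgGamma S
    unfold sgGamma
    rw [K0_cond_eq hgood g hg1 hg2 hτ]
  ext α
  simp only [Set.mem_union]
  constructor
  · intro hα
    by_cases hαS : α ∈ S
    · exact Or.inl hαS
    right
    have hnK : α ∉ sgK0 S := by
      rw [hK0]
      exact hαS
    rw [mem_sgK0_iff] at hnK
    push_neg at hnK
    obtain ⟨σ, hσ, i, h1, h2⟩ := hnK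
    by_cases hσ0 : σ = 0
    · subst hσ0
      rw [mem_sgDelta_iff]
      refine ⟨i, ?_, ?_⟩
      · have h1' : (0:ℤ) = sgTau S i - α i := h1
        omega
      · intro u hu
        have h2' : sgTau S u - α u < (0:ℤ) := h2 u hu
        omega
    · have hmem : α + σ ∈ S \ {0} := hα σ ⟨hσ, by simpa using hσ0⟩
      exfalso
      refine no_delta_tau hgood g hg1 hg2 (α + σ) hmem.1 i ?_ ?_
      · have h1' : σ i = sgTau S i - α i := h1
        have h3 := hτ i
        show α i + σ i = g i - 1
        omega
      · intro u hu
        have h2' : sgTau S u - α u < σ u := h2 u hu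
        have h3 := hτ u
        show g u - 1 < α u + σ u
        omega
  · intro hα
    intro w hw
    obtain ⟨hwS, hw0⟩ := hw
    have hw0' : w ≠ 0 := by simpa using hw0
    have hwnn : (0:I→ℤ) ≤ w := hgood.2.2.1 w hwS
    have hw1 : ∀ i, 1 ≤ w i := by
      intro i
      by_contra hni
      push_neg at hni
      have h2 : (0:ℤ) ≤ w i := hwnn i
      have h0 : w i = 0 := by omega
      exact hw0' (hloc w hwS ⟨i, h0⟩)
    rcases hα with hαS | hαΔ
    · refine ⟨hgood.2.1 α hαS w hwS, ?_⟩
      simp only [Set.mem_singleton_iff]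
      intro h0
      obtain ⟨i⟩ := ‹Nonempty I›
      have hαnn : (0:ℤ) ≤ α i := hgood.2.2.1 α hαS i
      have he : α i + w i = 0 := congrFun h0 i
      have := hw1 i
      omega
    · rw [mem_sgDelta_iff] at hαΔ
      obtain ⟨i, h1, h2⟩ := hαΔ
      have hge : g ≤ α + w := by
        intro u
        show g u ≤ α u + w u
        have hwu := hw1 u
        by_cases hu : u = i
        · subst hu
          have h3 := hτ u
          omega
        · have h4 := h2 u hu
          have h3 := hτ u
          omega
      refine ⟨hg1 _ hge, ?_⟩
      simp only [Set.mem_singleton_iff]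
      intro h0
      obtain ⟨i'⟩ := ‹Nonempty I›
      have hgi := hgpos i'
      have he : α i' + w i' = 0 := congrFun h0 i'
      have h5 : g i' ≤ α i' + w i' := hge i'
      omega
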